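/- Suppose the data ū_0,…,ū_8 are the exact cell averages of a polynomial u of degree at most 2, i.e. ū_j = ⟨u⟩_{Ω_j} for j = 0,…,8 on the 3×3 stencil. Then the optimal polynomial P_opt = ū_0 + Σ_{k=1}^5 c_k φ_k, where c = (c_1,…,c_5) is the least-squares solution of Σ_k c_k ⟨φ_k⟩_{Ω_j} = ū_j − ū_0 (j = 1,…,8), coincides with u: P_opt(x,y) = u(x,y) for all (x,y). -/

import Mathlib

open MeasureTheory intervalIntegral

/-- Cell average of `f` over the rectangle of size `dx × dy` centered at `(xc, yc)`. -/
noncomputable def cellAvg (xc yc dx dy : ℝ) (f : ℝ → ℝ → ℝ) : ℝ :=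
  (dx * dy)⁻¹ *
    ∫ x in (xc - dx / 2)..(xc + dx / 2),
      ∫ y in (yc - dy / 2)..(yc + dy / 2), f x y

/-- Offsets (in units of `Δx`, `Δy`) of the centers of the cells `Ω_0, Ω_1, …, Ω_8`
of the 3×3 stencil with respect to `(x_0, y_0)`. -/
def off9 : Fin 9 → ℝ × ℝ :=
  ![(0, 0), (-1, 1), (0, 1), (1, 1), (-1, 0), (1, 0), (-1, -1), (0, -1), (1, -1)]

/-- Basis polynomials `φ_1, …, φ_5` for the quadratic optimal polynomial. -/
noncomputable def phi5 (x0 y0 dx dy : ℝ) : Fin 5 → ℝ → ℝ → ℝ :=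
  ![fun x _ => x - x0,
    fun _ y => y - y0,
    fun x _ => (x - x0) ^ 2 - dx ^ 2 / 12,
    fun _ y => (y - y0) ^ 2 - dy ^ 2 / 12,
    fun x y => (x - x0) * (y - y0)]

lemma quad_integral (C0 C1 C2 y0 a b : ℝ) :
    ∫ y in a..b, (C0 + C1 * (y - y0) + C2 * (y - y0) ^ 2) =
      (C0 * b + C1 * (b - y0) ^ 2 / 2 + C2 * (b - y0) ^ 3 / 3) -
      (C0 * a + C1 * (a - y0) ^ 2 / 2 + C2 * (a - y0) ^ 3 / 3) := by
  apply intervalIntegral.integral_eq_sub_of_hasDerivAt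
  · intro y _
    have h1 : HasDerivAt (fun y : ℝ => y - y0) 1 y := by
      simpa using (hasDerivAt_id y).sub_const y0
    have h2 : HasDerivAt (fun y : ℝ => (y - y0) ^ 2) (2 * (y - y0)) y := by
      simpa using h1.fun_pow 2
    have h3 : HasDerivAt (fun y : ℝ => (y - y0) ^ 3) (3 * (y - y0) ^ 2) y := by
      simpa using h1.fun_pow 3
    have := (((hasDerivAt_id y).const_mul C0).add ((h2.const_mul C1).div_const 2)).add
      ((h3.const_mul C2).div_const 3)
    convert this using 1
    · funext b; simp only [Pi.add_apply, id]
    · ring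
  · apply Continuous.intervalIntegrable
    continuity

lemma cellAvg_quad (x0 y0 dx dy xc yc : ℝ) (hdx : dx ≠ 0) (hdy : dy ≠ 0)
    (a0 a1 a2 a3 a4 a5 : ℝ) :
    cellAvg xc yc dx dy (fun x y =>
        a0 + a1 * (x - x0) + a2 * (y - y0) + a3 * (x - x0) ^ 2 +
          a4 * (y - y0) ^ 2 + a5 * ((x - x0) * (y - y0))) =
      a0 + a1 * (xc - x0) + a2 * (yc - y0) + a3 * ((xc - x0) ^ 2 + dx ^ 2 / 12) +
        a4 * ((yc - y0) ^ 2 + dy ^ 2 / 12) + a5 * ((xc - x0) * (yc - y0)) := by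
  unfold cellAvg
  have houter : (∫ x in (xc - dx / 2)..(xc + dx / 2),
      ∫ y in (yc - dy / 2)..(yc + dy / 2),
        (a0 + a1 * (x - x0) + a2 * (y - y0) + a3 * (x - x0) ^ 2 +
          a4 * (y - y0) ^ 2 + a5 * ((x - x0) * (y - y0)))) =
      ∫ x in (xc - dx / 2)..(xc + dx / 2),
        ((a0 * dy + a2 * dy * (yc - y0) + a4 * ((yc - y0) ^ 2 * dy + dy ^ 3 / 12)) +
          (a1 * dy + a5 * dy * (yc - y0)) * (x - x0) + (a3 * dy) * (x - x0) ^ 2) := by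
    apply intervalIntegral.integral_congr
    intro x _
    have hcong : (∫ y in (yc - dy / 2)..(yc + dy / 2),
        (a0 + a1 * (x - x0) + a2 * (y - y0) + a3 * (x - x0) ^ 2 +
          a4 * (y - y0) ^ 2 + a5 * ((x - x0) * (y - y0)))) =
        ∫ y in (yc - dy / 2)..(yc + dy / 2),
          ((a0 + a1 * (x - x0) + a3 * (x - x0) ^ 2) +
            (a2 + a5 * (x - x0)) * (y - y0) + a4 * (y - y0) ^ 2) := by
      apply intervalIntegral.integral_congr
      intro y _
      ring
    simp only
    rw [hcong, quad_integral]
    ring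
  rw [houter, quad_integral]
  field_simp
  ring

/-- if the data `ū_0, …, ū_8` are the exact cell averages of a
bivariate polynomial `u` of degree at most 2 on the 3×3 stencil, then the
optimal polynomial `P_opt = ū_0 + ∑_k c_k φ_k` built from the least-squares
coefficients `c` reproduces `u` exactly. -/
theorem cweno3_optimal_polynomial_exact_on_quadratics
    (x0 y0 dx dy : ℝ) (hdx : 0 < dx) (hdy : 0 < dy) (a : Fin 6 → ℝ) :
    let uu : ℝ → ℝ → ℝ := fun x y =>
      a 0 + a 1 * (x - x0) + a 2 * (y - y0) + a 3 * (x - x0) ^ 2 +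
        a 4 * (y - y0) ^ 2 + a 5 * ((x - x0) * (y - y0))
    let ubar : Fin 9 → ℝ := fun j =>
      cellAvg (x0 + (off9 j).1 * dx) (y0 + (off9 j).2 * dy) dx dy uu
    let A : Fin 8 → Fin 5 → ℝ := fun j k =>
      cellAvg (x0 + (off9 j.succ).1 * dx) (y0 + (off9 j.succ).2 * dy) dx dy
        (phi5 x0 y0 dx dy k)
    let Φ : (Fin 5 → ℝ) → ℝ := fun cc =>
      ∑ j, (∑ k, cc k * A j k - (ubar j.succ - ubar 0)) ^ 2
    ∀ c : Fin 5 → ℝ, (∀ c' : Fin 5 → ℝ, Φ c ≤ Φ c') →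
      ∀ x y : ℝ, ubar 0 + ∑ k, c k * phi5 x0 y0 dx dy k x y = uu x y := by
  intro uu ubar A Φ c hmin x y
  have hdx' : dx ≠ 0 := hdx.ne'
  have hdy' : dy ≠ 0 := hdy.ne'
  -- cell averages of uu
  have hub : ∀ j : Fin 9, ubar j =
      a 0 + a 1 * ((off9 j).1 * dx) + a 2 * ((off9 j).2 * dy) +
        a 3 * (((off9 j).1 * dx) ^ 2 + dx ^ 2 / 12) +
        a 4 * (((off9 j).2 * dy) ^ 2 + dy ^ 2 / 12) +
        a 5 * (((off9 j).1 * dx) * ((off9 j).2 * dy)) := by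
    intro j
    have h := cellAvg_quad x0 y0 dx dy (x0 + (off9 j).1 * dx) (y0 + (off9 j).2 * dy)
      hdx' hdy' (a 0) (a 1) (a 2) (a 3) (a 4) (a 5)
    have hrfl : ubar j = cellAvg (x0 + (off9 j).1 * dx) (y0 + (off9 j).2 * dy) dx dy
        (fun x y => a 0 + a 1 * (x - x0) + a 2 * (y - y0) + a 3 * (x - x0) ^ 2 +
          a 4 * (y - y0) ^ 2 + a 5 * ((x - x0) * (y - y0))) := rfl
    rw [hrfl, h]
    ring
  -- cell averages of the basis polynomials
  have hA0 : ∀ j : Fin 8, A j 0 = (off9 j.succ).1 * dx := by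
    intro j
    have e : phi5 x0 y0 dx dy 0 = fun x y => (0:ℝ) + 1 * (x - x0) + 0 * (y - y0) +
        0 * (x - x0) ^ 2 + 0 * (y - y0) ^ 2 + 0 * ((x - x0) * (y - y0)) := by
      funext x y; simp [phi5]
    have hrfl : A j 0 = cellAvg (x0 + (off9 j.succ).1 * dx) (y0 + (off9 j.succ).2 * dy)
        dx dy (phi5 x0 y0 dx dy 0) := rfl
    rw [hrfl, e, cellAvg_quad x0 y0 dx dy _ _ hdx' hdy']
    ring
  have hA1 : ∀ j : Fin 8, A j 1 = (off9 j.succ).2 * dy := by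
    intro j
    have e : phi5 x0 y0 dx dy 1 = fun x y => (0:ℝ) + 0 * (x - x0) + 1 * (y - y0) +
        0 * (x - x0) ^ 2 + 0 * (y - y0) ^ 2 + 0 * ((x - x0) * (y - y0)) := by
      funext x y; simp [phi5]
    have hrfl : A j 1 = cellAvg (x0 + (off9 j.succ).1 * dx) (y0 + (off9 j.succ).2 * dy)
        dx dy (phi5 x0 y0 dx dy 1) := rfl
    rw [hrfl, e, cellAvg_quad x0 y0 dx dy _ _ hdx' hdy']
    ring
  have hA2 : ∀ j : Fin 8, A j 2 = ((off9 j.succ).1 * dx) ^ 2 := by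
    intro j
    have e : phi5 x0 y0 dx dy 2 = fun x y => (-(dx ^ 2 / 12)) + 0 * (x - x0) + 0 * (y - y0) +
        1 * (x - x0) ^ 2 + 0 * (y - y0) ^ 2 + 0 * ((x - x0) * (y - y0)) := by
      funext x y; simp [phi5]; ring
    have hrfl : A j 2 = cellAvg (x0 + (off9 j.succ).1 * dx) (y0 + (off9 j.succ).2 * dy)
        dx dy (phi5 x0 y0 dx dy 2) := rfl
    rw [hrfl, e, cellAvg_quad x0 y0 dx dy _ _ hdx' hdy']
    ring
  have hA3 : ∀ j : Fin 8, A j 3 = ((off9 j.succ).2 * dy) ^ 2 := by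
    intro j
    have e : phi5 x0 y0 dx dy 3 = fun x y => (-(dy ^ 2 / 12)) + 0 * (x - x0) + 0 * (y - y0) +
        0 * (x - x0) ^ 2 + 1 * (y - y0) ^ 2 + 0 * ((x - x0) * (y - y0)) := by
      funext x y; simp [phi5]; ring
    have hrfl : A j 3 = cellAvg (x0 + (off9 j.succ).1 * dx) (y0 + (off9 j.succ).2 * dy)
        dx dy (phi5 x0 y0 dx dy 3) := rfl
    rw [hrfl, e, cellAvg_quad x0 y0 dx dy _ _ hdx' hdy']
    ring
  have hA4 : ∀ j : Fin 8, A j 4 = ((off9 j.succ).1 * dx) * ((off9 j.succ).2 * dy) := by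
    intro j
    have e : phi5 x0 y0 dx dy 4 = fun x y => (0:ℝ) + 0 * (x - x0) + 0 * (y - y0) +
        0 * (x - x0) ^ 2 + 0 * (y - y0) ^ 2 + 1 * ((x - x0) * (y - y0)) := by
      funext x y; simp [phi5]
    have hrfl : A j 4 = cellAvg (x0 + (off9 j.succ).1 * dx) (y0 + (off9 j.succ).2 * dy)
        dx dy (phi5 x0 y0 dx dy 4) := rfl
    rw [hrfl, e, cellAvg_quad x0 y0 dx dy _ _ hdx' hdy']
    ring
  -- Φ at the exact coefficients is 0
  have hΦ : ∀ cc : Fin 5 → ℝ, Φ cc =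
      ∑ j, (∑ k, cc k * A j k - (ubar j.succ - ubar 0)) ^ 2 := fun _ => rfl
  have hub0 : ubar 0 = a 0 + a 3 * (dx ^ 2 / 12) + a 4 * (dy ^ 2 / 12) := by
    rw [hub 0]
    norm_num [off9]
  have hΦstar : Φ ![a 1, a 2, a 3, a 4, a 5] = 0 := by
    rw [hΦ]
    apply Finset.sum_eq_zero
    intro j _
    rw [Fin.sum_univ_five, hA0 j, hA1 j, hA2 j, hA3 j, hA4 j, hub j.succ, hub0]
    norm_num
    simp only [Matrix.cons_val_zero, Matrix.cons_val_one, Matrix.cons_val_two, Matrix.cons_val_three, Matrix.cons_val_four, Matrix.tail_cons, Matrix.head_cons]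
    ring
  have hΦc : Φ c = 0 := by
    refine le_antisymm ((hmin _).trans_eq hΦstar) ?_
    rw [hΦ]
    exact Finset.sum_nonneg fun j _ => sq_nonneg _
  have hterm : ∀ j : Fin 8, ∑ k, c k * A j k - (ubar j.succ - ubar 0) = 0 := by
    intro j
    have h := (Finset.sum_eq_zero_iff_of_nonneg (fun i _ => sq_nonneg
      (∑ k, c k * A i k - (ubar i.succ - ubar 0)))).mp ((hΦ c ▸ hΦc)) j (Finset.mem_univ j)
    exact pow_eq_zero_iff (by norm_num) |>.mp h
  have E : ∀ j : Fin 8,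
      c 0 * ((off9 j.succ).1 * dx) + c 1 * ((off9 j.succ).2 * dy) +
        c 2 * ((off9 j.succ).1 * dx) ^ 2 + c 3 * ((off9 j.succ).2 * dy) ^ 2 +
        c 4 * (((off9 j.succ).1 * dx) * ((off9 j.succ).2 * dy)) =
      a 1 * ((off9 j.succ).1 * dx) + a 2 * ((off9 j.succ).2 * dy) +
        a 3 * ((off9 j.succ).1 * dx) ^ 2 + a 4 * ((off9 j.succ).2 * dy) ^ 2 +
        a 5 * (((off9 j.succ).1 * dx) * ((off9 j.succ).2 * dy)) := by
    intro j
    have h := hterm j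
    rw [Fin.sum_univ_five, hA0 j, hA1 j, hA2 j, hA3 j, hA4 j, hub j.succ, hub0] at h
    linear_combination h
  -- extract the five equations
  have o2 : off9 (1 : Fin 8).succ = (0, 1) := rfl
  have o3 : off9 (2 : Fin 8).succ = (1, 1) := rfl
  have o4 : off9 (3 : Fin 8).succ = (-1, 0) := rfl
  have o5 : off9 (4 : Fin 8).succ = (1, 0) := rfl
  have o7 : off9 (6 : Fin 8).succ = (0, -1) := rfl
  have e2 := E 1; rw [o2] at e2; norm_num at e2
  have e3 := E 2; rw [o3] at e3; norm_num at e3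
  have e4 := E 3; rw [o4] at e4; norm_num at e4
  have e5 := E 4; rw [o5] at e5; norm_num at e5
  have e7 := E 6; rw [o7] at e7; norm_num at e7
  have hdx2 : dx ^ 2 ≠ 0 := pow_ne_zero _ hdx'
  have hdy2 : dy ^ 2 ≠ 0 := pow_ne_zero _ hdy'
  have h2 : c 2 = a 3 := by
    have h : (c 2 - a 3) * dx ^ 2 = 0 := by linear_combination (e4 + e5) / 2
    have := (mul_eq_zero.mp h).resolve_right hdx2
    linarith
  have h0 : c 0 = a 1 := by
    have h : (c 0 - a 1) * dx = 0 := by linear_combination (e5 - e4) / 2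
    have := (mul_eq_zero.mp h).resolve_right hdx'
    linarith
  have h3 : c 3 = a 4 := by
    have h : (c 3 - a 4) * dy ^ 2 = 0 := by linear_combination (e2 + e7) / 2
    have := (mul_eq_zero.mp h).resolve_right hdy2
    linarith
  have h1 : c 1 = a 2 := by
    have h : (c 1 - a 2) * dy = 0 := by linear_combination (e2 - e7) / 2
    have := (mul_eq_zero.mp h).resolve_right hdy'
    linarith
  have h4 : c 4 = a 5 := by
    have h : (c 4 - a 5) * (dx * dy) = 0 := by
      linear_combination e3 - dx * h0 - dy * h1 - dx ^ 2 * h2 - dy ^ 2 * h3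
    have := (mul_eq_zero.mp h).resolve_right (mul_ne_zero hdx' hdy')
    linarith
  -- conclude
  have huu : uu x y = a 0 + a 1 * (x - x0) + a 2 * (y - y0) + a 3 * (x - x0) ^ 2 +
      a 4 * (y - y0) ^ 2 + a 5 * ((x - x0) * (y - y0)) := rfl
  rw [huu, Fin.sum_univ_five, hub0, h0, h1, h2, h3, h4]
  simp [phi5]
  ring
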